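/- For the Heisenberg geodesic with initial covector (cos φ, sin φ, r), r > 0, the first conjugate time equals 2π/r: the differential of the exponential map E₀(t, φ, r) = (x(t,φ,r), y(t,φ,r), w(t,φ,r)) (with x, y, w as in the explicit Heisenberg geodesic formulas) is singular at t = 2π/r and nonsingular for 0 < t < 2π/r. -/

import Mathlib

open Real

/-- The Heisenberg exponential map from the origin, in coordinates (t, φ, r). -/
noncomputable def heisExp : ℝ × ℝ × ℝ → ℝ × ℝ × ℝ := fun p =>
  letI t := p.1; letI φ := p.2.1; letI r := p.2.2
  ((Real.sin (r * t + φ) - Real.sin φ) / r,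
   (Real.cos φ - Real.cos (r * t + φ)) / r,
   (r * t - Real.sin (r * t)) / (2 * r ^ 2))

noncomputable def e3 : (ℝ × ℝ × ℝ) ≃ₗ[ℝ] (Fin 3 → ℝ) :=
  LinearEquiv.ofLinear
    (LinearMap.pi (fun i => ![LinearMap.fst ℝ ℝ (ℝ × ℝ),
      (LinearMap.fst ℝ ℝ ℝ).comp (LinearMap.snd ℝ ℝ (ℝ × ℝ)),
      (LinearMap.snd ℝ ℝ ℝ).comp (LinearMap.snd ℝ ℝ (ℝ × ℝ))] i))
    ((LinearMap.proj 0).prod (((LinearMap.proj 1 : (Fin 3 → ℝ) →ₗ[ℝ] ℝ)).prod (LinearMap.proj 2)))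
    (by ext v i; fin_cases i <;> simp [LinearMap.pi_apply]) 
    (by ext ⟨a, b, c⟩ <;> simp [LinearMap.pi_apply])

noncomputable def B3 : Module.Basis (Fin 3) ℝ (ℝ × ℝ × ℝ) := Module.Basis.ofEquivFun e3

lemma det_formula (f : (ℝ × ℝ × ℝ) →ₗ[ℝ] (ℝ × ℝ × ℝ)) :
    LinearMap.det f =
      (f (1,0,0)).1 * ((f (0,1,0)).2.1 * (f (0,0,1)).2.2 - (f (0,0,1)).2.1 * (f (0,1,0)).2.2)
      - (f (0,1,0)).1 * ((f (1,0,0)).2.1 * (f (0,0,1)).2.2 - (f (0,0,1)).2.1 * (f (1,0,0)).2.2)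
      + (f (0,0,1)).1 * ((f (1,0,0)).2.1 * (f (0,1,0)).2.2 - (f (0,1,0)).2.1 * (f (1,0,0)).2.2) := by
  rw [← LinearMap.det_toMatrix B3, Matrix.det_fin_three]
  have h0 : (Module.Basis.ofEquivFun e3) 0 = ((1:ℝ),(0:ℝ),(0:ℝ)) := by
    simp [e3]
  have h1 : (Module.Basis.ofEquivFun e3) 1 = ((0:ℝ),(1:ℝ),(0:ℝ)) := by
    simp [e3]
  have h2 : (Module.Basis.ofEquivFun e3) 2 = ((0:ℝ),(0:ℝ),(1:ℝ)) := by
    simp [e3]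
  simp only [LinearMap.toMatrix_apply, B3, Module.Basis.ofEquivFun_repr_apply, h0, h1, h2]
  simp [e3, LinearMap.pi_apply]
  ring

noncomputable def P1 : ℝ × ℝ × ℝ →L[ℝ] ℝ := ContinuousLinearMap.fst ℝ ℝ (ℝ × ℝ)
noncomputable def P2 : ℝ × ℝ × ℝ →L[ℝ] ℝ :=
  (ContinuousLinearMap.fst ℝ ℝ ℝ).comp (ContinuousLinearMap.snd ℝ ℝ (ℝ × ℝ))
noncomputable def P3 : ℝ × ℝ × ℝ →L[ℝ] ℝ :=
  (ContinuousLinearMap.snd ℝ ℝ ℝ).comp (ContinuousLinearMap.snd ℝ ℝ (ℝ × ℝ))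

noncomputable def row (a b c : ℝ) : ℝ × ℝ × ℝ →L[ℝ] ℝ := a • P1 + b • P2 + c • P3

@[simp] lemma row_apply (a b c : ℝ) (v : ℝ × ℝ × ℝ) :
    row a b c v = a * v.1 + b * v.2.1 + c * v.2.2 := by
  simp [row, P1, P2, P3]

noncomputable def heisD (t φ r : ℝ) : ℝ × ℝ × ℝ →L[ℝ] ℝ × ℝ × ℝ :=
  (row (Real.cos (r*t+φ)) ((Real.cos (r*t+φ) - Real.cos φ)/r)
      (t * Real.cos (r*t+φ)/r - (Real.sin (r*t+φ) - Real.sin φ)/r^2)).prod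
  ((row (Real.sin (r*t+φ)) ((Real.sin (r*t+φ) - Real.sin φ)/r)
      (t * Real.sin (r*t+φ)/r - (Real.cos φ - Real.cos (r*t+φ))/r^2)).prod
   (row ((1 - Real.cos (r*t))/(2*r)) 0
      (t*(1-Real.cos (r*t))/(2*r^2) - (r*t - Real.sin (r*t))/r^3)))

set_option maxHeartbeats 1000000 in
lemma heisExp_hasFDerivAt (t φ r : ℝ) (hr : r ≠ 0) :
    HasFDerivAt heisExp (heisD t φ r) (t, φ, r) := by
  have h1 : HasFDerivAt (fun p : ℝ × ℝ × ℝ => p.1) P1 (t, φ, r) := hasFDerivAt_fst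
  have h2 : HasFDerivAt (fun p : ℝ × ℝ × ℝ => p.2.1) P2 (t, φ, r) :=
    hasFDerivAt_fst.comp _ hasFDerivAt_snd
  have h3 : HasFDerivAt (fun p : ℝ × ℝ × ℝ => p.2.2) P3 (t, φ, r) :=
    hasFDerivAt_snd.comp _ hasFDerivAt_snd
  have hu : HasFDerivAt (fun p : ℝ × ℝ × ℝ => p.2.2 * p.1 + p.2.1)
      ((r • P1 + t • P3) + P2) (t, φ, r) := (h3.mul h1).add h2
  have hs : HasFDerivAt (fun p : ℝ × ℝ × ℝ => p.2.2 * p.1)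
      (r • P1 + t • P3) (t, φ, r) := h3.mul h1
  have hsinu : HasFDerivAt (fun p : ℝ × ℝ × ℝ => Real.sin (p.2.2 * p.1 + p.2.1))
      (Real.cos (r * t + φ) • ((r • P1 + t • P3) + P2)) (t, φ, r) :=
    (Real.hasDerivAt_sin (r * t + φ)).comp_hasFDerivAt (t,φ,r) (f := fun p : ℝ × ℝ × ℝ => p.2.2 * p.1 + p.2.1) hu
  have hcosu : HasFDerivAt (fun p : ℝ × ℝ × ℝ => Real.cos (p.2.2 * p.1 + p.2.1))
      ((-Real.sin (r * t + φ)) • ((r • P1 + t • P3) + P2)) (t, φ, r) :=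
    (Real.hasDerivAt_cos (r * t + φ)).comp_hasFDerivAt (t,φ,r) (f := fun p : ℝ × ℝ × ℝ => p.2.2 * p.1 + p.2.1) hu
  have hsinphi : HasFDerivAt (fun p : ℝ × ℝ × ℝ => Real.sin p.2.1)
      (Real.cos φ • P2) (t, φ, r) :=
    (Real.hasDerivAt_sin φ).comp_hasFDerivAt (t,φ,r) (f := fun p : ℝ × ℝ × ℝ => p.2.1) h2
  have hcosphi : HasFDerivAt (fun p : ℝ × ℝ × ℝ => Real.cos p.2.1)
      ((-Real.sin φ) • P2) (t, φ, r) :=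
    (Real.hasDerivAt_cos φ).comp_hasFDerivAt (t,φ,r) (f := fun p : ℝ × ℝ × ℝ => p.2.1) h2
  have hsins : HasFDerivAt (fun p : ℝ × ℝ × ℝ => Real.sin (p.2.2 * p.1))
      (Real.cos (r * t) • (r • P1 + t • P3)) (t, φ, r) :=
    (Real.hasDerivAt_sin (r * t)).comp_hasFDerivAt (t,φ,r) (f := fun p : ℝ × ℝ × ℝ => p.2.2 * p.1) hs
  have hinv : HasFDerivAt (fun p : ℝ × ℝ × ℝ => (p.2.2)⁻¹)
      ((-(r ^ 2)⁻¹) • P3) (t, φ, r) :=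
    (hasDerivAt_inv hr).comp_hasFDerivAt (t,φ,r) h3
  have h2r2 : (2 : ℝ) * r ^ 2 ≠ 0 := by positivity
  have hinv2 : HasFDerivAt (fun p : ℝ × ℝ × ℝ => (2 * (p.2.2) ^ 2)⁻¹)
      ((-(2 * (2 * r)) / (2 * r ^ 2) ^ 2) • P3) (t, φ, r) := by
    have hd : HasDerivAt (fun y : ℝ => (2 * y ^ 2)⁻¹) (-(2 * (2 * r)) / (2 * r ^ 2) ^ 2) r := by
      have := ((hasDerivAt_pow 2 r).const_mul 2).inv h2r2
      exact this.congr_deriv (by norm_num)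
    exact hd.comp_hasFDerivAt (t,φ,r) (f := fun p : ℝ × ℝ × ℝ => p.2.2) h3
  -- x component
  have hx : HasFDerivAt (fun p : ℝ × ℝ × ℝ =>
      (Real.sin (p.2.2 * p.1 + p.2.1) - Real.sin p.2.1) * (p.2.2)⁻¹)
      ((Real.sin (r*t+φ) - Real.sin φ) • ((-(r ^ 2)⁻¹) • P3) +
        r⁻¹ • (Real.cos (r * t + φ) • ((r • P1 + t • P3) + P2) - Real.cos φ • P2)) (t, φ, r) :=
    (hsinu.sub hsinphi).mul hinv
  have hy : HasFDerivAt (fun p : ℝ × ℝ × ℝ =>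
      (Real.cos p.2.1 - Real.cos (p.2.2 * p.1 + p.2.1)) * (p.2.2)⁻¹)
      ((Real.cos φ - Real.cos (r*t+φ)) • ((-(r ^ 2)⁻¹) • P3) +
        r⁻¹ • ((-Real.sin φ) • P2 - (-Real.sin (r * t + φ)) • ((r • P1 + t • P3) + P2))) (t, φ, r) :=
    (hcosphi.sub hcosu).mul hinv
  have hw : HasFDerivAt (fun p : ℝ × ℝ × ℝ =>
      (p.2.2 * p.1 - Real.sin (p.2.2 * p.1)) * (2 * (p.2.2) ^ 2)⁻¹)
      ((r * t - Real.sin (r * t)) • ((-(2 * (2 * r)) / (2 * r ^ 2) ^ 2) • P3) +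
        (2 * r ^ 2)⁻¹ • ((r • P1 + t • P3) - Real.cos (r * t) • (r • P1 + t • P3))) (t, φ, r) :=
    (hs.sub hsins).mul hinv2
  have hE : heisExp = fun p : ℝ × ℝ × ℝ =>
      ((Real.sin (p.2.2 * p.1 + p.2.1) - Real.sin p.2.1) * (p.2.2)⁻¹,
       (Real.cos p.2.1 - Real.cos (p.2.2 * p.1 + p.2.1)) * (p.2.2)⁻¹,
       (p.2.2 * p.1 - Real.sin (p.2.2 * p.1)) * (2 * (p.2.2) ^ 2)⁻¹) := by
    funext p
    simp only [heisExp]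
    rw [div_eq_mul_inv, div_eq_mul_inv, div_eq_mul_inv]
  rw [hE]
  refine (hx.prodMk (hy.prodMk hw)).congr_fderiv ?_
  apply ContinuousLinearMap.ext
  intro v
  refine Prod.ext ?_ (Prod.ext ?_ ?_) <;>
  · simp only [heisD, ContinuousLinearMap.prod_apply, ContinuousLinearMap.add_apply,
      ContinuousLinearMap.smul_apply, ContinuousLinearMap.sub_apply, row_apply,
      smul_eq_mul, P1, P2, P3, ContinuousLinearMap.coe_comp', Function.comp_apply,
      ContinuousLinearMap.coe_fst', ContinuousLinearMap.coe_snd']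
    field_simp
    ring

set_option maxHeartbeats 1000000 in
lemma det_heisD (t φ r : ℝ) (hr : r ≠ 0) :
    LinearMap.det (heisD t φ r).toLinearMap
      = (2 - 2 * Real.cos (r*t) - r * t * Real.sin (r*t)) / r ^ 4 := by
  rw [det_formula]
  simp only [ContinuousLinearMap.coe_coe, heisD, ContinuousLinearMap.prod_apply, row_apply]
  rw [Real.cos_add, Real.sin_add]
  field_simp
  ring_nf
  linear_combination
    (r^3*(-3*Real.cos (r*t) - Real.cos (r*t)*Real.sin (r*t)^2 + 3*Real.cos (r*t)^2
      - Real.cos (r*t)^3 + 1 + 3*Real.sin (r*t)^2 - 2*r*t*Real.sin (r*t))) * (Real.sin_sq_add_cos_sq φ)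
    + (r^3*(3 - Real.cos (r*t))) * (Real.sin_sq_add_cos_sq (r*t))

lemma key_pos {s : ℝ} (h0 : 0 < s) (h2 : s < 2 * π) :
    0 < 2 - 2 * Real.cos s - s * Real.sin s := by
  have hx0 : 0 < s / 2 := by linarith
  have hxπ : s / 2 < π := by linarith
  set x := s / 2 with hxdef
  have hsin : 0 < Real.sin x := Real.sin_pos_of_pos_of_lt_pi hx0 hxπ
  have hsub : 0 < Real.sin x - x * Real.cos x := by
    rcases le_or_gt (Real.cos x) 0 with h | h
    · nlinarith
    · have hxlt : x < π / 2 := by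
        by_contra hle
        push_neg at hle
        exact absurd (Real.cos_nonpos_of_pi_div_two_le_of_le hle (by linarith [Real.pi_pos]))
          (not_le.2 h)
      have ht := Real.lt_tan hx0 hxlt
      rw [Real.tan_eq_sin_div_cos] at ht
      have := (lt_div_iff₀ h).mp ht
      linarith
  have hs2 : s = 2 * x := by rw [hxdef]; ring
  rw [hs2, Real.cos_two_mul, Real.sin_two_mul]
  nlinarith [Real.sin_sq_add_cos_sq x, mul_pos hsin hsub]


/-- for r > 0, the first conjugate time of the Heisenberg geodesic with
initial covector (cos φ, sin φ, r) is 2π/r: the differential of the exponential map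
is singular at t = 2π/r and nonsingular for 0 < t < 2π/r. -/
theorem stmt17 (φ r : ℝ) (hr : r > 0) :
    (LinearMap.det (fderiv ℝ heisExp (2 * π / r, φ, r)).toLinearMap = 0) ∧
    (∀ t : ℝ, 0 < t → t < 2 * π / r →
      LinearMap.det (fderiv ℝ heisExp (t, φ, r)).toLinearMap ≠ 0) := by
  constructor
  · rw [(heisExp_hasFDerivAt (2 * π / r) φ r hr.ne').fderiv, det_heisD _ _ _ hr.ne']
    have h2π : r * (2 * π / r) = 2 * π := by field_simp
    rw [h2π]
    simp [Real.cos_two_pi, Real.sin_two_pi]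
  · intro t ht htlt
    rw [(heisExp_hasFDerivAt t φ r hr.ne').fderiv, det_heisD _ _ _ hr.ne']
    have hs0 : 0 < r * t := mul_pos hr ht
    have hs2 : r * t < 2 * π := by
      have := (lt_div_iff₀ hr).mp htlt
      linarith
    exact div_ne_zero (ne_of_gt (key_pos hs0 hs2)) (pow_ne_zero _ hr.ne')
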